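/- arXiv:2601.19453 — 3 statements merged into one kernel-verified Lean document; each statement's English description precedes it below -/
import Mathlib

section
/- In the greedy stack algorithm run on a hidden sorted sequence with witness subsequence x_{i_1}, ..., x_{i_k} (listing the k distinct values in increasing order), for every j, after the element x_{i_j} has been processed, the bottom j elements of the stack are exactly the j smallest distinct values of X in increasing order, and these j elements are never removed from the stack afterwards. -/
noncomputable def greedyStep (s : List ℝ) (x : ℝ) : List ℝ :=
  if x ∈ s then s else x :: s.dropWhile (fun y => decide (x ≤ y))

/-- The greedy stack algorithm run on a sequence; the head of the resulting
list is the top of the stack. -/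
noncomputable def greedy (X : List ℝ) : List ℝ := X.foldl greedyStep []

def IsSortedWitness (Q X : List ℝ) : Prop :=
  Q.Sublist X ∧ Q.Pairwise (· < ·) ∧ Q.toFinset = X.toFinset

lemma greedyStep_sorted {s : List ℝ} {x : ℝ} (hs : s.Pairwise (· > ·)) :
    (greedyStep s x).Pairwise (· > ·) := by
  unfold greedyStep
  split
  · exact hs
  · rw [List.pairwise_cons]
    set d := s.dropWhile (fun y => decide (x ≤ y)) with hd
    have hsor : d.Pairwise (· > ·) := hs.sublist (List.dropWhile_sublist _)
    refine ⟨?_, hsor⟩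
    intro y hy
    have hne : d ≠ [] := by rintro h; rw [h] at hy; simp at hy
    rcases List.exists_cons_of_ne_nil hne with ⟨a, t, ht⟩
    have hne' : s.dropWhile (fun y => decide (x ≤ y)) ≠ [] := by rw [← hd]; exact hne
    have hhead := List.head_dropWhile_not (fun y => decide (x ≤ y)) (l := s) hne'
    have h2 : List.dropWhile (fun y => decide (x ≤ y)) s = a :: t := hd.symm.trans ht
    simp only [h2, List.head_cons, decide_eq_false_iff_not, not_le] at hhead
    rw [ht] at hy hsor
    rcases List.mem_cons.mp hy with h | h
    · rw [h]; exact hhead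
    · exact lt_trans (List.rel_of_pairwise_cons hsor h) hhead

lemma greedy_sorted_aux (P : List ℝ) : ∀ s : List ℝ, s.Pairwise (· > ·) →
    (P.foldl greedyStep s).Pairwise (· > ·) := by
  induction P with
  | nil => intro s hs; exact hs
  | cons x P ih => intro s hs; exact ih _ (greedyStep_sorted hs)

lemma greedy_sorted (P : List ℝ) : (greedy P).Pairwise (· > ·) :=
  greedy_sorted_aux P [] (by simp)

lemma greedyStep_subset {s : List ℝ} {x : ℝ} : ∀ y ∈ greedyStep s x, y = x ∨ y ∈ s := by
  intro y hy
  unfold greedyStep at hy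
  split at hy
  · exact Or.inr hy
  · rcases List.mem_cons.mp hy with h | h
    · exact Or.inl h
    · exact Or.inr ((List.dropWhile_sublist _).subset h)

lemma greedy_subset_aux (P : List ℝ) : ∀ s : List ℝ, ∀ y ∈ P.foldl greedyStep s,
    y ∈ s ∨ y ∈ P := by
  induction P with
  | nil => intro s y hy; exact Or.inl hy
  | cons x P ih =>
    intro s y hy
    rcases ih (greedyStep s x) y hy with h | h
    · rcases greedyStep_subset y h with h | h
      · exact Or.inr (by simp [h])
      · exact Or.inl h
    · exact Or.inr (List.mem_cons_of_mem _ h)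

lemma greedy_subset (P : List ℝ) : ∀ y ∈ greedy P, y ∈ P := by
  intro y hy
  rcases greedy_subset_aux P [] y hy with h | h
  · simp at h
  · exact h

lemma sorted_get_le_of_mem {Q : List ℝ} (hQ : Q.Pairwise (· < ·)) {y : ℝ} {i : ℕ}
    (hi : i < Q.length) (hy : y ∈ Q) (hny : y ∉ Q.take i) : Q[i] ≤ y := by
  have hyd : y ∈ Q.drop i := by
    rcases List.mem_append.mp ((List.take_append_drop i Q).symm ▸ hy) with h | h
    · exact absurd h hny
    · exact h
  rw [List.drop_eq_getElem_cons hi] at hyd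
  have hds : (Q.drop i).Pairwise (· < ·) := hQ.sublist (List.drop_sublist i Q)
  rw [List.drop_eq_getElem_cons hi] at hds
  rcases List.mem_cons.mp hyd with h | h
  · exact le_of_eq h.symm
  · exact le_of_lt (List.rel_of_pairwise_cons hds h)

lemma mem_take_lt_get {Q : List ℝ} (hQ : Q.Pairwise (· < ·)) {i : ℕ}
    (hi : i < Q.length) : ∀ y ∈ Q.take i, y < Q[i] := by
  intro y hy
  have h := hQ
  rw [← List.take_append_drop i Q] at h
  have h2 := (List.pairwise_append.mp h).2.2
  have : Q[i] ∈ Q.drop i := by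
    rw [List.drop_eq_getElem_cons hi]; exact List.mem_cons_self
  exact h2 y hy Q[i] this

lemma dropWhile_eq_self_of_forall {p : ℝ → Bool} {l : List ℝ}
    (h : ∀ y ∈ l, p y = false) : l.dropWhile p = l := by
  cases l with
  | nil => rfl
  | cons a t =>
    rw [List.dropWhile_cons, h a (List.mem_cons_self)]
    simp


lemma take_succ_eq {Q : List ℝ} {i : ℕ} (hi : i < Q.length) :
    Q.take (i+1) = Q.take i ++ [Q[i]] := by
  rw [List.take_succ]
  simp [List.getElem?_eq_getElem hi]

lemma stack_split {s : List ℝ} (k : ℕ) :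
    s = (s.reverse.drop k).reverse ++ (s.reverse.take k).reverse := by
  rw [← List.reverse_append, List.take_append_drop, List.reverse_reverse]

lemma take_len {Q : List ℝ} {r : List ℝ} {j : ℕ} (hj : j ≤ Q.length)
    (hr : r.take j = Q.take j) : j ≤ r.length := by
  have h1 : (r.take j).length = j := by
    rw [hr, List.length_take]; omega
  rw [List.length_take] at h1; omega

lemma step_extend {Q : List ℝ} (hQs : Q.Pairwise (· < ·)) {s : List ℝ} {j : ℕ}
    (hsort : s.Pairwise (· > ·)) (hsQ : ∀ y ∈ s, y ∈ Q)
    (hjQ : j < Q.length) (hr : s.reverse.take j = Q.take j) :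
    (greedyStep s Q[j]).reverse.take (j+1) = Q.take (j+1) := by
  have hrsort : s.reverse.Pairwise (· < ·) := List.pairwise_reverse.mpr hsort
  have hrnodup : s.reverse.Nodup := hrsort.nodup
  have hrQ : ∀ y ∈ s.reverse, y ∈ Q := fun y hy => hsQ y (List.mem_reverse.mp hy)
  have hlenr : j ≤ s.reverse.length := take_len (le_of_lt hjQ) hr
  have hdropge : ∀ y ∈ s.reverse.drop j, Q[j] ≤ y := by
    intro y hy
    have hyr : y ∈ s.reverse := (List.drop_sublist _ _).subset hy
    have hynt : y ∉ Q.take j := by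
      rw [← hr]
      exact fun hmem => (List.disjoint_take_drop hrnodup (le_refl j)) hmem hy
    exact sorted_get_le_of_mem hQs hjQ (hrQ y hyr) hynt
  unfold greedyStep
  split
  · rename_i hxs
    have hxr : Q[j] ∈ s.reverse := List.mem_reverse.mpr hxs
    have hxnt : Q[j] ∉ s.reverse.take j := by
      rw [hr]; intro hmem
      exact absurd (mem_take_lt_get hQs hjQ _ hmem) (lt_irrefl _)
    have hxdrop : Q[j] ∈ s.reverse.drop j := by
      rcases List.mem_append.mp ((List.take_append_drop j s.reverse).symm ▸ hxr) with h | h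
      · exact absurd h hxnt
      · exact h
    have hlt : j < s.reverse.length := by
      by_contra h
      rw [List.drop_eq_nil_of_le (le_of_not_gt h)] at hxdrop
      simp at hxdrop
    have hdropc := List.drop_eq_getElem_cons hlt
    have hcx : s.reverse[j] ≤ Q[j] := by
      rw [hdropc] at hxdrop
      rcases List.mem_cons.mp hxdrop with h | h
      · exact le_of_eq h.symm
      · have hds : (s.reverse.drop j).Pairwise (· < ·) := hrsort.sublist (List.drop_sublist _ _)
        rw [hdropc] at hds
        exact le_of_lt (List.rel_of_pairwise_cons hds h)
    have hxc : Q[j] ≤ s.reverse[j] :=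
      hdropge _ (by rw [hdropc]; exact List.mem_cons_self)
    rw [take_succ_eq hlt, take_succ_eq hjQ, hr, le_antisymm hcx hxc]
  · rename_i hxs
    have hall2 : ∀ y ∈ (s.reverse.take j).reverse, (fun y => decide (Q[j] ≤ y)) y = false := by
      intro y hy
      rw [List.mem_reverse, hr] at hy
      have := mem_take_lt_get hQs hjQ y hy
      simp only [decide_eq_false_iff_not, not_le]
      linarith
    have hall1 : ∀ y ∈ (s.reverse.drop j).reverse, (fun y => decide (Q[j] ≤ y)) y = true := by
      intro y hy
      rw [List.mem_reverse] at hy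
      simp [hdropge y hy]
    have hdw : s.dropWhile (fun y => decide (Q[j] ≤ y)) = (s.reverse.take j).reverse := by
      conv_lhs => rw [stack_split (s := s) j]
      rw [List.dropWhile_append, List.dropWhile_eq_nil_iff.mpr hall1]
      simp only [List.isEmpty_nil, if_true]
      exact dropWhile_eq_self_of_forall hall2
    rw [hdw, List.reverse_cons, List.reverse_reverse, hr, ← take_succ_eq hjQ]
    exact List.take_of_length_le (by rw [List.length_take]; omega)

lemma step_preserve {Q : List ℝ} (hQs : Q.Pairwise (· < ·)) {s : List ℝ} {x : ℝ} {j : ℕ}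
    (hsort : s.Pairwise (· > ·)) (hxQ : x ∈ Q)
    (hj : j ≤ Q.length) (hr : s.reverse.take j = Q.take j) :
    (greedyStep s x).reverse.take j = Q.take j := by
  unfold greedyStep
  split
  · exact hr
  · rename_i hxs
    rcases Nat.eq_zero_or_pos j with hj0 | hjpos
    · simp [hj0]
    · have hjQ : j - 1 < Q.length := by omega
      have hlenr : j ≤ s.reverse.length := take_len hj hr
      have hxq : Q[j-1] < x := by
        by_contra h
        push_neg at h
        have hxtake : x ∈ Q.take j := by
          rcases lt_or_eq_of_le hj with hjlen | hjlen
          · by_contra hxt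
            have h1 := sorted_get_le_of_mem hQs hjlen hxQ hxt
            have h2 : Q[j-1] < Q[j] := by
              apply mem_take_lt_get hQs hjlen
              have ht := take_succ_eq hjQ
              rw [show (j-1)+1 = j by omega] at ht
              rw [ht]
              exact List.mem_append_right _ (List.mem_singleton_self _)
            linarith
          · rw [hjlen, List.take_length]; exact hxQ
        rw [← hr] at hxtake
        exact hxs (List.mem_reverse.mp ((List.take_sublist _ _).subset hxtake))
      have halllt : ∀ y ∈ Q.take j, y < x := by
        intro y hy
        have ht := take_succ_eq hjQ
        rw [show (j-1)+1 = j by omega] at ht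
        rw [ht] at hy
        rcases List.mem_append.mp hy with h | h
        · exact lt_trans (mem_take_lt_get hQs hjQ y h) hxq
        · rw [List.mem_singleton.mp h]; exact hxq
      rw [List.reverse_cons]
      conv_lhs => rw [stack_split (s := s) j]
      rw [List.dropWhile_append]
      by_cases hemp : (List.dropWhile (fun y => decide (x ≤ y)) (s.reverse.drop j).reverse).isEmpty = true
      · rw [if_pos hemp]
        have hall2 : ∀ y ∈ (s.reverse.take j).reverse, (fun y => decide (x ≤ y)) y = false := by
          intro y hy
          rw [List.mem_reverse, hr] at hy
          simp only [decide_eq_false_iff_not, not_le]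
          linarith [halllt y hy]
        rw [dropWhile_eq_self_of_forall hall2, List.reverse_reverse]
        rw [List.take_append_of_le_length (by rw [hr, List.length_take]; omega)]
        rw [hr]
        exact List.take_of_length_le (by rw [List.length_take]; omega)
      · rw [if_neg hemp, List.reverse_append, List.reverse_reverse, List.append_assoc]
        rw [List.take_append_of_le_length (by rw [hr, List.length_take]; omega)]
        rw [hr]
        exact List.take_of_length_le (by rw [List.length_take]; omega)

lemma greedy_invariant (Q : List ℝ) (hQs : Q.Pairwise (· < ·)) (P : List ℝ) :
    (∀ y ∈ P, y ∈ Q) → ∀ j, j ≤ Q.length →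
      (Q.take j).Sublist P → (greedy P).reverse.take j = Q.take j := by
  induction P using List.reverseRecOn with
  | nil =>
    intro _ j hj hsub
    rw [List.sublist_nil.mp hsub]
    simp [greedy]
  | append_singleton P x ih =>
    intro hPQ j hj hsub
    have hPQ' : ∀ y ∈ P, y ∈ Q := fun y hy => hPQ y (List.mem_append_left _ hy)
    have hxQ : x ∈ Q := hPQ x (List.mem_append_right _ (List.mem_singleton_self x))
    have hgr : greedy (P ++ [x]) = greedyStep (greedy P) x := by
      simp [greedy, List.foldl_append]
    rw [hgr]
    by_cases hc : (Q.take j).Sublist P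
    · exact step_preserve hQs (greedy_sorted P) hxQ hj (ih hPQ' j hj hc)
    · obtain ⟨l1, l2, heq, hl1, hl2⟩ := List.sublist_append_iff.mp hsub
      rcases List.sublist_singleton.mp hl2 with h2 | h2
      · exact absurd (by rw [heq, h2, List.append_nil]; exact hl1) hc
      · subst h2
        have hjpos : 0 < j := by
          by_contra h
          push_neg at h
          interval_cases j
          simp at heq
        have hjQ : j - 1 < Q.length := by omega
        have hsucc := take_succ_eq (Q := Q) hjQ
        rw [show (j-1)+1 = j by omega] at hsucc
        rw [hsucc] at heq
        obtain ⟨he1, he2⟩ := List.append_inj' heq.symm (by simp)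
        have hxval : x = Q[j-1] := by simpa using he2
        have hsub' : (Q.take (j-1)).Sublist P := he1 ▸ hl1
        have hrr := ih hPQ' (j-1) (by omega) hsub'
        rw [hxval]
        have hstep := step_extend hQs (greedy_sorted P)
          (fun y hy => hPQ' y (greedy_subset P y hy)) hjQ hrr
        rw [show (j-1)+1 = j by omega] at hstep
        exact hstep

/-- Run the greedy stack algorithm on a hidden sorted sequence `X` with witness
`Q` (listing the distinct values in increasing order).  For every `j`, and every
prefix `X.take m` of the sequence in which the first `j` witness elements have
already been processed (i.e. `Q.take j` is a subsequence of `X.take m`), the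
bottom `j` elements of the current stack are exactly the `j` smallest distinct
values of `X` in increasing order.  Since this holds for *every* such prefix
length `m`, these `j` elements are never removed afterwards. -/
theorem stmt_3 (X Q : List ℝ) (hQ : IsSortedWitness Q X) :
    ∀ j m : ℕ, (Q.take j).Sublist (X.take m) →
      (greedy (X.take m)).reverse.take j
        = (X.toFinset.sort (· ≤ ·)).take j := by
  obtain ⟨hQX, hQs, hQF⟩ := hQ
  have hsort_eq : X.toFinset.sort (· ≤ ·) = Q := by
    rw [← hQF]
    exact (List.toFinset_sort _ hQs.nodup).mpr (hQs.imp le_of_lt)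
  intro j m hsub
  rw [hsort_eq]
  have hPQ : ∀ y ∈ X.take m, y ∈ Q := by
    intro y hy
    have h1 : y ∈ X := (List.take_sublist _ _).subset hy
    have h2 : y ∈ X.toFinset := List.mem_toFinset.mpr h1
    rw [← hQF] at h2
    exact List.mem_toFinset.mp h2
  rcases le_or_gt j Q.length with hj | hj
  · exact greedy_invariant Q hQs (X.take m) hPQ j hj hsub
  · have hsub' : (Q.take Q.length).Sublist (X.take m) := by
      rw [List.take_length]
      rw [List.take_of_length_le (le_of_lt hj)] at hsub
      exact hsub
    have h1 := greedy_invariant Q hQs (X.take m) hPQ Q.length (le_refl _) hsub'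
    rw [List.take_length] at h1
    set r := (greedy (X.take m)).reverse with hrdef
    have hrn : r.Nodup := by
      have : r.Pairwise (· < ·) := List.pairwise_reverse.mpr (greedy_sorted _)
      exact this.nodup
    have hsubQ : ∀ y ∈ r, y ∈ Q := fun y hy =>
      hPQ y (greedy_subset _ y (List.mem_reverse.mp hy))
    have hlen : r.length ≤ Q.length := by
      have hc1 : r.toFinset.card = r.length := List.toFinset_card_of_nodup hrn
      have hc2 : r.toFinset ⊆ Q.toFinset := by
        intro y hy
        exact List.mem_toFinset.mpr (hsubQ y (List.mem_toFinset.mp hy))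
      calc r.length = r.toFinset.card := hc1.symm
        _ ≤ Q.toFinset.card := Finset.card_le_card hc2
        _ ≤ Q.length := List.toFinset_card_le Q
    have hreq : r = Q := (List.take_of_length_le hlen).symm.trans h1
    rw [List.take_of_length_le (l := r) (by omega), hreq,
      List.take_of_length_le (le_of_lt hj)]
end

section
/- Let Ξ be a sorting-supersequence of a family R of intervals, formed by concatenating sequences Ξ_1, ..., Ξ_k where Ξ_i is a universal word on the intervals of a set S_i', such that: the sets W_i (unions of clusters) are ordered left to right, every point of any realization lies in exactly one group P_i (points in W_i but not W_{i-1}), and all intervals whose points can land in W_i \ W_{i-1} belong to S_i'. Then for any realization P of R, the sorted order of P is a subsequence of the realized sequence of Ξ. -/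
private lemma flatten_ofFn_sublist {α : Type*} : ∀ {m : ℕ} (f g : Fin m → List α),
    (∀ j, (f j).Sublist (g j)) → (List.ofFn f).flatten.Sublist (List.ofFn g).flatten := by
  intro m
  induction m with
  | zero => simp
  | succ m ih =>
    intro f g h
    simp only [List.ofFn_succ, List.flatten_cons]
    exact (h 0).append (ih _ _ fun j => h j.succ)



/-- Concatenating universal words over the clusters yields a
sorting-supersequence.  Setting: `R` is a family of `n` intervals (regions),
`Ξ j` is a universal word over the index set `S' j` (it contains every linear
ordering of `S' j` as a subsequence), and the concatenation `Ξ₁ … Ξ_k` is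
considered.  For any realization `p` of `R` (one point per region) admitting a
grouping `grp` of the regions into the windows such that (i) points of earlier
groups lie strictly to the left of points of later groups, and (ii) every
region whose point lands in group `j` belongs to `S' j`, the sorted order of
the realized points is a subsequence of the realized concatenated sequence. -/
theorem stmt_14 (n k : ℕ) (R : Fin n → Set ℝ) (Ξ : Fin k → List (Fin n))
    (S' : Fin k → Finset (Fin n))
    (huniv : ∀ j : Fin k, ∀ l : List (Fin n),
      l.Nodup → l.toFinset = S' j → l.Sublist (Ξ j))
    (p : Fin n → ℝ) (hp : ∀ i, p i ∈ R i)
    (grp : Fin n → Fin k)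
    (hmono : ∀ a b : Fin n, grp a < grp b → p a < p b)
    (hgrp : ∀ a : Fin n, a ∈ S' (grp a)) :
    ∃ L : List ℝ, L.Perm (List.ofFn p) ∧ L.Pairwise (· ≤ ·) ∧
      L.Sublist (((List.ofFn Ξ).flatten).map p) := by
  classical
  set F : Fin k → List (Fin n) := fun j => (List.finRange n).filter (fun a => grp a = j) with hF
  set sIdx : Fin k → List (Fin n) := fun j => (F j).mergeSort (fun a b => decide (p a ≤ p b))
    with hsIdx
  have hmemS : ∀ j a, a ∈ sIdx j ↔ grp a = j := by
    intro j a
    simp [hsIdx, List.mem_mergeSort, hF, List.mem_filter, List.mem_finRange]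
  have hnodupS : ∀ j, (sIdx j).Nodup := by
    intro j
    exact ((List.mergeSort_perm (F j) _).nodup_iff).2 ((List.nodup_finRange n).filter _)
  refine ⟨((List.ofFn sIdx).flatten).map p, ?_, ?_, ?_⟩
  · -- Perm
    rw [List.ofFn_eq_map (f := p)]
    refine List.Perm.map p ?_
    rw [List.perm_iff_count]
    intro a
    rw [List.count_flatten, List.map_ofFn, List.sum_ofFn]
    have hcnt : ∀ j, List.count a (sIdx j) = if grp a = j then 1 else 0 := by
      intro j
      by_cases h : grp a = j
      · simp only [h, if_pos rfl]
        exact List.count_eq_one_of_mem (hnodupS j) ((hmemS j a).2 h)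
      · simp only [if_neg h]
        exact List.count_eq_zero.2 (fun hm => h ((hmemS j a).1 hm))
    simp only [Function.comp, hcnt]
    rw [Finset.sum_ite_eq (Finset.univ) (grp a) (fun _ => 1)]
    simp [List.count_eq_one_of_mem (List.nodup_finRange n) (List.mem_finRange a)]
  · -- Sorted
    rw [List.pairwise_map, List.pairwise_flatten]
    constructor
    · intro l hl
      simp only [List.mem_ofFn] at hl
      obtain ⟨j, rfl⟩ := hl
      have := List.pairwise_mergeSort (le := fun a b => decide (p a ≤ p b))
        (fun a b c hab hbc => by
          simp only [decide_eq_true_eq] at *; exact le_trans hab hbc)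
        (fun a b => by simp only [Bool.or_eq_true, decide_eq_true_eq]; exact le_total _ _)
        (F j)
      refine this.imp ?_
      intro a b h; simpa using h
    · rw [List.pairwise_ofFn]
      intro i j hij x hx y hy
      have hx' := (hmemS i x).1 hx
      have hy' := (hmemS j y).1 hy
      exact le_of_lt (hmono x y (by rw [hx', hy']; exact hij))
  · -- Sublist
    refine List.Sublist.map p ?_
    refine flatten_ofFn_sublist sIdx Ξ ?_
    intro j
    set ext : List (Fin n) := sIdx j ++ (S' j).toList.filter (fun a => ¬ grp a = j) with hext
    have hnodup : ext.Nodup := by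
      rw [hext, List.nodup_append]
      refine ⟨hnodupS j, (S' j).nodup_toList.filter _, ?_⟩
      intro a ha b hb rfl
      rw [List.mem_filter] at hb
      have := (hmemS j a).1 ha
      simp [this] at hb
    have htf : ext.toFinset = S' j := by
      ext a
      simp only [hext, List.toFinset_append, Finset.mem_union, List.mem_toFinset,
        List.mem_filter, Finset.mem_toList, hmemS]
      constructor
      · rintro (h | ⟨h, _⟩)
        · rw [← h]; exact hgrp a
        · exact h
      · intro h
        by_cases hg : grp a = j
        · exact Or.inl hg
        · exact Or.inr ⟨h, by simp [hg]⟩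
    exact (List.sublist_append_left _ _).trans (huniv j ext hnodup htf)
end

section
/- Let R be a finite set of intervals and let UB_min(R) be the minimum over all pairs {I, J} of distinct intervals of R of the maximum distance between a point of I and a point of J. If an interval I ∈ R is at distance greater than UB_min(R) from every other interval of R, then for every realization P of R, the point chosen in I is not an endpoint of a smallest gap of P (i.e., the pair of consecutive points realizing the minimum gap does not include the point of I), provided |R| ≥ 3. -/
/-- Smallest-gap pruning.  Let `R` be a family of `n ≥ 3` closed intervals
`[a i, b i]`, and let `U = UB_min(R)` be the minimum over all pairs of distinct
intervals of the maximum distance between a point of one and a point of the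
other (for `[a i, b i]` and `[a j, b j]` this maximum distance is
`max (b j - a i) (b i - a j)`).  If an interval `I_{i₀}` is at distance greater
than `U` from every other interval (every point of `I_{i₀}` is at distance
`> U` from every point of every other interval), then for every realization
`p` of `R`, the point `p i₀` is not an endpoint of a smallest gap: some pair of
points not involving `i₀` is strictly closer than every pair involving
`i₀`. -/
theorem stmt_16 (n : ℕ) (hn : 3 ≤ n) (a b : Fin n → ℝ) (hab : ∀ i, a i ≤ b i)
    (U : ℝ)
    (hU : IsLeast {d : ℝ | ∃ i j : Fin n, i ≠ j ∧
      d = max (b j - a i) (b i - a j)} U)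
    (i₀ : Fin n)
    (hfar : ∀ j : Fin n, j ≠ i₀ → ∀ x ∈ Set.Icc (a i₀) (b i₀),
      ∀ y ∈ Set.Icc (a j) (b j), U < |x - y|)
    (p : Fin n → ℝ) (hp : ∀ i, p i ∈ Set.Icc (a i) (b i)) :
    ∃ l m : Fin n, l ≠ m ∧ l ≠ i₀ ∧ m ≠ i₀ ∧
      ∀ j : Fin n, j ≠ i₀ → |p l - p m| < |p i₀ - p j| := by
  obtain ⟨⟨i, j, hij, hUeq⟩, -⟩ := hU
  have hbound : |p i - p j| ≤ U := by
    rw [hUeq, abs_sub_le_iff]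
    constructor
    · exact le_max_of_le_right (sub_le_sub (hp i).2 (hp j).1)
    · exact le_max_of_le_left (sub_le_sub (hp j).2 (hp i).1)
  have hi : i ≠ i₀ := by
    rintro rfl
    exact absurd hbound (not_le.2 (hfar j hij.symm _ (hp _) _ (hp j)))
  have hj : j ≠ i₀ := by
    rintro rfl
    rw [abs_sub_comm] at hbound
    exact absurd hbound (not_le.2 (hfar i hij _ (hp _) _ (hp i)))
  exact ⟨i, j, hij, hi, hj, fun k hk =>
    lt_of_le_of_lt hbound (hfar k hk _ (hp i₀) _ (hp k))⟩
end
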